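/- Let n be an even natural number and γ > 0, Δ > 0, R_S > 0. Set C_n = γ^{n+1} 2ⁿ Δ^{(n+1)/2} R_S^{n/2+1} / (π (n+2) C(n, n/2)). Then the function L(t) = ((3(n+2)/2) · C_n · t)^{2/(3(n+2))} satisfies L(0) = 0, is differentiable on (0,∞) with L'(t) = C_n · L(t)^{−3n/2−2} for all t > 0, and L(T) = R_S holds exactly for T = T_BH(n) := 2π C(n, n/2) R_S^{n+2} / (3 γ^{n+1} 2ⁿ Δ^{(n+1)/2}). In particular, the black-hole lifetime for even n scales as the (n+2)-th power of R_S, and for n = 0 it equals 2π R_S²/(3γ√Δ). -/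

import Mathlib

open Real

/-- Shock-speed constant for even `n`:
`C_n = γ^{n+1} 2ⁿ Δ^{(n+1)/2} R_S^{n/2+1} / (π(n+2) C(n,n/2))`. -/
noncomputable def Cshock (n : ℕ) (γ Δ RS : ℝ) : ℝ :=
  γ ^ (n + 1) * 2 ^ n * Δ ^ (((n : ℝ) + 1) / 2) * RS ^ ((n : ℝ) / 2 + 1) /
    (π * ((n : ℝ) + 2) * (n.choose (n / 2) : ℝ))

/-- Shock location: `L(t) = ((3(n+2)/2) C_n t)^{2/(3(n+2))}`. -/
noncomputable def Lshock (n : ℕ) (γ Δ RS t : ℝ) : ℝ :=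
  ((3 * ((n : ℝ) + 2) / 2) * Cshock n γ Δ RS * t) ^ ((2 : ℝ) / (3 * ((n : ℝ) + 2)))

/-- Black-hole lifetime for even `n`:
`T_BH(n) = 2π C(n,n/2) R_S^{n+2} / (3 γ^{n+1} 2ⁿ Δ^{(n+1)/2})`. -/
noncomputable def TBH (n : ℕ) (γ Δ RS : ℝ) : ℝ :=
  2 * π * (n.choose (n / 2) : ℝ) * RS ^ (n + 2) /
    (3 * γ ^ (n + 1) * 2 ^ n * Δ ^ (((n : ℝ) + 1) / 2))

/-- For even `n`, the shock trajectory `L` starts at the centre, solves the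
Rankine–Hugoniot ODE `L' = C_n L^{−3n/2−2}`, and reaches the horizon `L = R_S`
exactly at `T_BH(n) ∝ R_S^{n+2}`; for `n = 0` the lifetime is
`2π R_S²/(3γ√Δ)`. -/
theorem black_hole_lifetime_even
    (n : ℕ) (hn : Even n) (γ Δ RS : ℝ) (hγ : 0 < γ) (hΔ : 0 < Δ) (hRS : 0 < RS) :
    Lshock n γ Δ RS 0 = 0 ∧
    (∀ t, 0 < t → HasDerivAt (fun t' => Lshock n γ Δ RS t')
      (Cshock n γ Δ RS * (Lshock n γ Δ RS t) ^ (-(3 * (n : ℝ) / 2) - 2)) t) ∧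
    Lshock n γ Δ RS (TBH n γ Δ RS) = RS ∧
    (n = 0 → TBH n γ Δ RS = 2 * π * RS ^ 2 / (3 * γ * Real.sqrt Δ)) := by
  have hπ : (0 : ℝ) < π := Real.pi_pos
  have hch : (0 : ℝ) < (n.choose (n / 2) : ℝ) := by
    exact_mod_cast Nat.choose_pos (Nat.div_le_self n 2)
  have hn2 : (0 : ℝ) < (n : ℝ) + 2 := by positivity
  have hD : 0 < Δ ^ (((n : ℝ) + 1) / 2) := Real.rpow_pos_of_pos hΔ _
  have hR1 : 0 < RS ^ ((n : ℝ) / 2 + 1) := Real.rpow_pos_of_pos hRS _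
  have hC : 0 < Cshock n γ Δ RS := by
    unfold Cshock; positivity
  set C := Cshock n γ Δ RS with hCdef
  have ha : 0 < 3 * ((n : ℝ) + 2) / 2 * C := by positivity
  have hp : ((2 : ℝ) / (3 * ((n : ℝ) + 2))) ≠ 0 := by positivity
  refine ⟨?_, ?_, ?_, ?_⟩
  · unfold Lshock
    rw [mul_zero, Real.zero_rpow hp]
  · intro t ht
    have hat : 0 < 3 * ((n : ℝ) + 2) / 2 * C * t := mul_pos ha ht
    have hlin : HasDerivAt (fun t' : ℝ => 3 * ((n : ℝ) + 2) / 2 * C * t')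
        (3 * ((n : ℝ) + 2) / 2 * C) t := by
      simpa using (hasDerivAt_id t).const_mul (3 * ((n : ℝ) + 2) / 2 * C)
    have hrpow := (Real.hasDerivAt_rpow_const
        (x := 3 * ((n : ℝ) + 2) / 2 * C * t) (p := (2 : ℝ) / (3 * ((n : ℝ) + 2)))
        (Or.inl (ne_of_gt hat))).comp t hlin
    have hexp : (2 : ℝ) / (3 * ((n : ℝ) + 2)) * (-(3 * (n : ℝ) / 2) - 2)
        = (2 : ℝ) / (3 * ((n : ℝ) + 2)) - 1 := by
      field_simp
      ring
    have hpa : (2 : ℝ) / (3 * ((n : ℝ) + 2)) * (3 * ((n : ℝ) + 2) / 2 * C) = C := by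
      field_simp
    have key : (2 : ℝ) / (3 * ((n : ℝ) + 2)) *
        (3 * ((n : ℝ) + 2) / 2 * C * t) ^ ((2 : ℝ) / (3 * ((n : ℝ) + 2)) - 1) *
        (3 * ((n : ℝ) + 2) / 2 * C)
        = C * (Lshock n γ Δ RS t) ^ (-(3 * (n : ℝ) / 2) - 2) := by
      unfold Lshock
      rw [← hCdef, ← Real.rpow_mul hat.le, hexp]
      linear_combination
        (3 * ((n : ℝ) + 2) / 2 * C * t) ^ ((2 : ℝ) / (3 * ((n : ℝ) + 2)) - 1) * hpa
    rw [← key]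
    exact hrpow
  · have key2 : 3 * ((n : ℝ) + 2) / 2 * C * TBH n γ Δ RS
        = RS ^ ((n : ℝ) / 2 + 1) * RS ^ (n + 2) := by
      rw [hCdef]
      unfold Cshock TBH
      have hγn : γ ^ (n + 1) ≠ 0 := by positivity
      have h2n : (2 : ℝ) ^ n ≠ 0 := by positivity
      field_simp
    unfold Lshock
    rw [← hCdef, key2, ← Real.rpow_natCast RS (n + 2), ← Real.rpow_add hRS,
      ← Real.rpow_mul hRS.le]
    have : ((n : ℝ) / 2 + 1 + ((n : ℕ) + 2 : ℕ)) * ((2 : ℝ) / (3 * ((n : ℝ) + 2))) = 1 := by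
      push_cast
      field_simp
      ring
    rw [this, Real.rpow_one]
  · intro h0
    subst h0
    unfold TBH
    rw [Real.sqrt_eq_rpow]
    norm_num
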